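/- For n ≥ 3, the quotient S/(I, z) is isomorphic as a graded K-algebra to K[x, y_1, …, y_n]/(y_i y_j : 1 ≤ i < j ≤ n), and it is Cohen-Macaulay of Krull dimension 2, where I = (y_i y_j − xz : 1 ≤ i < j ≤ n) is the join-meet ideal of the diamond lattice D_{n+2} in S = K[x, y_1, …, y_n, z]. -/

import Mathlib

open MvPolynomial

noncomputable def xP (K : Type*) [Field K] (n : ℕ) : MvPolynomial (Fin (n + 2)) K := X 0
noncomputable def zP (K : Type*) [Field K] (n : ℕ) : MvPolynomial (Fin (n + 2)) K :=
  X (Fin.last (n + 1))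
noncomputable def yP (K : Type*) [Field K] (n : ℕ) (i : Fin n) : MvPolynomial (Fin (n + 2)) K :=
  X i.succ.castSucc

/-- The join-meet ideal `I` of the diamond lattice `D_{n+2}`. -/
noncomputable def diamondIdeal (K : Type*) [Field K] (n : ℕ) :
    Ideal (MvPolynomial (Fin (n + 2)) K) :=
  Ideal.span {f | ∃ i j : Fin n, i < j ∧ f = yP K n i * yP K n j - xP K n * zP K n}

/-- Regular sequence (elementwise colon characterization). -/
def IsRegSeq {R : Type*} [CommRing R] {m : ℕ} (f : Fin m → R) : Prop :=
  (∀ k : Fin m, ∀ s : R,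
      f k * s ∈ Ideal.span (f '' {j | j < k}) → s ∈ Ideal.span (f '' {j | j < k})) ∧
    Ideal.span (Set.range f) ≠ ⊤

/-- Cohen–Macaulay of dimension `m` for a graded quotient of a polynomial ring. -/
def IsCMofDim {K : Type*} [Field K] {σ : Type*} (I : Ideal (MvPolynomial σ K)) (m : ℕ) :
    Prop :=
  ringKrullDim (MvPolynomial σ K ⧸ I) = m ∧
    ∃ f : Fin m → (MvPolynomial σ K ⧸ I),
      (∀ i, f i ∈ Ideal.map (Ideal.Quotient.mk I)
        (Ideal.span (Set.range (X : σ → MvPolynomial σ K)))) ∧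
      IsRegSeq f

/-- The squarefree monomial ideal `(y_iy_j : i < j)` in `K[x, y_1, …, y_n]`,
where `x = X 0` and `y_i = X i` in `MvPolynomial (Fin (n+1)) K`. -/
noncomputable def yyIdeal (K : Type*) [Field K] (n : ℕ) :
    Ideal (MvPolynomial (Fin (n + 1)) K) :=
  Ideal.span {f | ∃ i j : Fin n, i < j ∧ f = X i.succ * X j.succ}


section Helpers

variable {R S : Type*} [CommRing R] [CommRing S]

lemma pid_no_three_chain [IsDomain S] [IsPrincipalIdealRing S]
    {P0 P1 P2 : Ideal S} (h01 : P0 < P1) (h12 : P1 < P2)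
    (hp1 : P1.IsPrime) (hp2 : P2.IsPrime) : False := by
  have h1b : P1 ≠ ⊥ := by
    intro h; rw [h] at h01; exact (not_lt_bot h01)
  haveI := hp1
  have hmax : P1.IsMaximal := IsPrime.to_maximal_ideal h1b
  exact hp2.ne_top (hmax.1.2 P2 h12)

lemma comap_equiv_lt (e : R ≃+* S) {P Q : Ideal R} (h : P < Q) :
    P.comap (e.symm : S →+* R) < Q.comap (e.symm : S →+* R) := by
  have key : ∀ I : Ideal R,
      (I.comap (e.symm : S →+* R)).comap (e : R →+* S) = I := by
    intro I
    rw [Ideal.comap_comap]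
    have : (e.symm : S →+* R).comp (e : R →+* S) = RingHom.id R := by
      ext x; simp
    rw [this, Ideal.comap_id]
  refine lt_of_le_of_ne (Ideal.comap_mono h.le) ?_
  intro heq
  have := congrArg (Ideal.comap (e : R →+* S)) heq
  rw [key P, key Q] at this
  exact h.ne this

lemma no_three_chain_of_equiv [IsDomain S] [IsPrincipalIdealRing S] (e : R ≃+* S)
    {P0 P1 P2 : Ideal R} (h01 : P0 < P1) (h12 : P1 < P2)
    (hp1 : P1.IsPrime) (hp2 : P2.IsPrime) : False := by
  haveI := hp1; haveI := hp2
  exact pid_no_three_chain (comap_equiv_lt e h01) (comap_equiv_lt e h12)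
    (Ideal.IsPrime.comap _) (Ideal.IsPrime.comap _)

lemma push_quot_lt {I P Q : Ideal R} (hIP : I ≤ P) (hIQ : I ≤ Q) (h : P < Q) :
    P.map (Ideal.Quotient.mk I) < Q.map (Ideal.Quotient.mk I) := by
  refine lt_of_le_of_ne (Ideal.map_mono h.le) ?_
  intro heq
  have key : ∀ J : Ideal R, I ≤ J →
      (J.map (Ideal.Quotient.mk I)).comap (Ideal.Quotient.mk I) = J := by
    intro J hJ
    rw [Ideal.comap_map_of_surjective _ Ideal.Quotient.mk_surjective]
    rw [← RingHom.ker_eq_comap_bot, Ideal.mk_ker]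
    exact sup_eq_left.mpr hJ
  have := congrArg (Ideal.comap (Ideal.Quotient.mk I)) heq
  rw [key P hIP, key Q hIQ] at this
  exact h.ne this

lemma push_quot_prime {I P : Ideal R} (hIP : I ≤ P) (hp : P.IsPrime) :
    (P.map (Ideal.Quotient.mk I)).IsPrime := by
  haveI := hp
  exact Ideal.map_isPrime_of_surjective Ideal.Quotient.mk_surjective
    (by rwa [Ideal.mk_ker])

end Helpers

/-- `MvPolynomial (Fin 1) R ≃ₐ[R] R[X]`. -/
noncomputable def finOnePolyEquiv (R : Type*) [CommRing R] :
    MvPolynomial (Fin 1) R ≃ₐ[R] Polynomial R :=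
  (renameEquiv R (Equiv.equivPUnit.{1, 1} (Fin 1))).trans (pUnitAlgEquiv R)

section Core
variable {K : Type*} [Field K]

local notation "A" => Polynomial K
local notation "B" => MvPolynomial (Fin 1) (Polynomial K)

/-- No 3-chain of primes in `B` all containing a maximal fiber ideal. -/
lemma fiber_max {q : Ideal A} (hq : q.IsMaximal)
    {R0 R1 R2 : Ideal B} (hp0 : R0.IsPrime) (hp1 : R1.IsPrime) (hp2 : R2.IsPrime)
    (h01 : R0 < R1) (h12 : R1 < R2)
    (hq0 : q.map (C : A →+* B) ≤ R0) : False := by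
  haveI := hq
  haveI := hq.isPrime
  set I : Ideal B := q.map (C : A →+* B) with hI
  have hq1 : I ≤ R1 := le_trans hq0 h01.le
  have hq2 : I ≤ R2 := le_trans hq1 h12.le
  have E : (B ⧸ I) ≃+* Polynomial (A ⧸ q) :=
    ((MvPolynomial.quotientEquivQuotientMvPolynomial (σ := Fin 1) q).symm.toRingEquiv).trans
      (finOnePolyEquiv (A ⧸ q)).toRingEquiv
  haveI : IsPrincipalIdealRing (Polynomial (A ⧸ q)) := by
    letI : Field (A ⧸ q) := Ideal.Quotient.field q
    exact inferInstance
  exact no_three_chain_of_equiv (S := Polynomial (A ⧸ q)) E (push_quot_lt hq0 hq1 h01) (push_quot_lt hq1 hq2 h12)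
    (push_quot_prime hq1 hp1) (push_quot_prime hq2 hp2)

attribute [local instance] MvPolynomial.algebraMvPolynomial

/-- No 3-chain of primes in `B` whose top contracts to `⊥` in `A`. -/
lemma fiber_bot {R0 R1 R2 : Ideal B}
    (hp0 : R0.IsPrime) (hp1 : R1.IsPrime) (hp2 : R2.IsPrime)
    (h01 : R0 < R1) (h12 : R1 < R2)
    (hc : R2.comap (C : A →+* B) = ⊥) : False := by
  classical
  set F := FractionRing A
  set M : Submonoid A := nonZeroDivisors A
  set B' := MvPolynomial (Fin 1) F
  haveI : IsLocalization (M.map (C : A →+* B)) B' := MvPolynomial.isLocalization M F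
  set φ : B →+* B' := algebraMap B B'
  have hdisj : ∀ {Q : Ideal B}, Q ≤ R2 → Disjoint ((M.map (C : A →+* B)) : Set B) (Q : Set B) := by
    intro Q hQ
    rw [Set.disjoint_left]
    rintro x ⟨a, haM, rfl⟩ hxQ
    have : a ∈ R2.comap (C : A →+* B) := hQ hxQ
    rw [hc] at this
    exact nonZeroDivisors.ne_zero haM this
  have push : ∀ {P Q : Ideal B}, P.IsPrime → Q.IsPrime → Q ≤ R2 → P < Q →
      P.map φ < Q.map φ := by
    intro P Q hP hQ hQ2 h
    refine lt_of_le_of_ne (Ideal.map_mono h.le) ?_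
    intro heq
    have e1 := IsLocalization.comap_map_of_isPrime_disjoint (M.map (C : A →+* B)) B' hP
      (hdisj (le_trans h.le hQ2))
    have e2 := IsLocalization.comap_map_of_isPrime_disjoint (M.map (C : A →+* B)) B' hQ
      (hdisj hQ2)
    rw [← e1, ← e2, heq] at h
    exact h.ne rfl
  have pprime : ∀ {Q : Ideal B}, Q.IsPrime → Q ≤ R2 → (Q.map φ).IsPrime := by
    intro Q hQ hQ2
    exact IsLocalization.isPrime_of_isPrime_disjoint (M.map (C : A →+* B)) B' Q hQ (hdisj hQ2)
  exact no_three_chain_of_equiv (finOnePolyEquiv F).toRingEquiv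
    (push hp0 hp1 h12.le h01) (push hp1 hp2 le_rfl h12)
    (pprime hp1 h12.le) (pprime hp2 le_rfl)

/-- No chain of four primes in `K[x][y₁]`. -/
lemma no_four_chain {Q0 Q1 Q2 Q3 : Ideal B}
    (p0 : Q0.IsPrime) (p1 : Q1.IsPrime) (p2 : Q2.IsPrime) (p3 : Q3.IsPrime)
    (h01 : Q0 < Q1) (h12 : Q1 < Q2) (h23 : Q2 < Q3) : False := by
  classical
  set c1 : Ideal A := Q1.comap (C : A →+* B) with hc1def
  set c2 : Ideal A := Q2.comap (C : A →+* B) with hc2def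
  haveI := p1; haveI := p2
  haveI : c1.IsPrime := Ideal.IsPrime.comap _
  haveI : c2.IsPrime := Ideal.IsPrime.comap _
  by_cases hc2 : c2 = ⊥
  · exact fiber_bot p0 p1 p2 h01 h12 hc2
  · have hc2max : c2.IsMaximal := IsPrime.to_maximal_ideal hc2
    by_cases hc1 : c1 = ⊥
    · -- show Q2 = c2.map C, then use UFD structure
      have hmle : c2.map (C : A →+* B) ≤ Q2 := Ideal.map_le_iff_le_comap.mpr le_rfl
      have hmle3 : c2.map (C : A →+* B) ≤ Q3 := le_trans hmle h23.le
      -- quotient by the fiber ideal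
      have E : (B ⧸ c2.map (C : A →+* B)) ≃+* Polynomial (A ⧸ c2) :=
        ((MvPolynomial.quotientEquivQuotientMvPolynomial (σ := Fin 1) c2).symm.toRingEquiv).trans
          (finOnePolyEquiv (A ⧸ c2)).toRingEquiv
      haveI : IsPrincipalIdealRing (Polynomial (A ⧸ c2)) := by
        letI : Field (A ⧸ c2) := Ideal.Quotient.field c2
        exact inferInstance
      have hQ2 : Q2 = c2.map (C : A →+* B) := by
        by_contra hne
        have hlt : c2.map (C : A →+* B) < Q2 := lt_of_le_of_ne hmle (Ne.symm hne)
        exact no_three_chain_of_equiv (S := Polynomial (A ⧸ c2)) E (push_quot_lt le_rfl hmle hlt)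
          (push_quot_lt hmle hmle3 h23) (push_quot_prime hmle p2) (push_quot_prime hmle3 p3)
      -- UFD argument
      obtain ⟨g, hg⟩ := (IsPrincipalIdealRing.principal c2).principal
      have hg0 : g ≠ 0 := by
        rintro rfl
        apply hc2
        rw [hg]; simp [Ideal.span_singleton_eq_bot]
      have hQ2g : Q2 = Ideal.span {(C g : B)} := by
        rw [hQ2, hg]
        exact (Ideal.map_span (C : A →+* B) {g}).trans (by rw [Set.image_singleton])
      have hCg0 : (C g : B) ≠ 0 := by
        simpa using hg0
      have hCgprime : Prime (C g : B) := by
        rw [← Ideal.span_singleton_prime hCg0, ← hQ2g]; exact p2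
      have hQ1bot : Q1 ≠ ⊥ := by
        intro h; rw [h] at h01; exact not_lt_bot h01
      obtain ⟨f, hfQ1, hf0⟩ := Submodule.exists_mem_ne_zero_of_ne_bot hQ1bot
      have hCgQ1 : (C g : B) ∉ Q1 := by
        intro h
        have : g ∈ c1 := h
        rw [hc1] at this
        exact hg0 this
      obtain ⟨m, h, hnd, hfac⟩ := WfDvdMonoid.max_power_factor hf0 hCgprime.irreducible
      rw [hfac] at hfQ1
      rcases p1.mul_mem_iff_mem_or_mem.mp hfQ1 with hmem | hmem
      · exact hCgQ1 (p1.mem_of_pow_mem _ hmem)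
      · have : h ∈ Q2 := h12.le hmem
        rw [hQ2g, Ideal.mem_span_singleton] at this
        exact hnd this
    · -- c1 ≠ ⊥, so c1 is maximal; use fiber_max on Q1 < Q2 < Q3
      have hc1max : c1.IsMaximal := IsPrime.to_maximal_ideal hc1
      exact fiber_max hc1max p1 p2 p3 h12 h23 (Ideal.map_le_iff_le_comap.mpr le_rfl)

end Core

section Bridge
variable {K : Type*} [Field K] {n : ℕ}

local notation "T" => MvPolynomial (Fin (n + 1)) K
local notation "A" => Polynomial K
local notation "B" => MvPolynomial (Fin 1) (Polynomial K)

lemma yy_upper (hn : 1 ≤ n) {P0 P1 P2 P3 : Ideal T}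
    (p0 : P0.IsPrime) (p1 : P1.IsPrime) (p2 : P2.IsPrime) (p3 : P3.IsPrime)
    (h01 : P0 < P1) (h12 : P1 < P2) (h23 : P2 < P3)
    (hyy : yyIdeal K n ≤ P0) : False := by
  classical
  -- choose the at most one `y`-variable not in `P0`
  have hk : ∃ k : Fin n, ∀ j : Fin n, j ≠ k → (X j.succ : T) ∈ P0 := by
    by_cases h : ∃ j : Fin n, (X j.succ : T) ∉ P0
    · obtain ⟨k, hknot⟩ := h
      refine ⟨k, fun j hj => ?_⟩
      rcases lt_or_gt_of_ne hj with h1 | h1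
      · have hmem : (X j.succ * X k.succ : T) ∈ P0 :=
          hyy (Ideal.subset_span ⟨j, k, h1, rfl⟩)
        rcases p0.mem_or_mem hmem with hm | hm
        · exact hm
        · exact absurd hm hknot
      · have hmem : (X k.succ * X j.succ : T) ∈ P0 :=
          hyy (Ideal.subset_span ⟨k, j, h1, rfl⟩)
        rcases p0.mem_or_mem hmem with hm | hm
        · exact absurd hm hknot
        · exact hm
    · push_neg at h
      exact ⟨⟨0, by omega⟩, fun j _ => h j⟩
  obtain ⟨k, hk⟩ := hk
  set W : Ideal T := Ideal.span (X '' (Fin.succ '' {j | j ≠ k})) with hW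
  have hWP0 : W ≤ P0 := by
    rw [hW, Ideal.span_le]
    rintro _ ⟨_, ⟨j, hj, rfl⟩, rfl⟩
    exact hk j hj
  set g : Fin (n + 1) → B :=
    Fin.cases (C Polynomial.X) (fun j => if j = k then X 0 else 0) with hg
  set ρ : T →+* B := eval₂Hom ((C : A →+* B).comp (Polynomial.C : K →+* A)) g with hρ
  have hρW : ∀ a ∈ W, ρ a = 0 := by
    intro a ha
    have : W ≤ RingHom.ker ρ := by
      rw [hW, Ideal.span_le]
      rintro _ ⟨_, ⟨j, hj, rfl⟩, rfl⟩
      simp only [SetLike.mem_coe, RingHom.mem_ker, hρ, eval₂Hom_X', hg]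
      simp [Fin.cases_succ, if_neg hj]
    exact this ha
  set ψ : B →+* T ⧸ W :=
    eval₂Hom (Polynomial.eval₂RingHom ((Ideal.Quotient.mk W).comp (C : K →+* T))
      (Ideal.Quotient.mk W (X 0))) (fun _ => Ideal.Quotient.mk W (X k.succ)) with hψ
  have SIMPS : (∀ a : K, ρ (C a) = C (Polynomial.C a)) ∧ ρ (X 0) = C Polynomial.X ∧
      (∀ j : Fin n, ρ (X j.succ) = if j = k then X 0 else 0) ∧
      (∀ c : A, ψ (C c) = Polynomial.eval₂ ((Ideal.Quotient.mk W).comp (C : K →+* T))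
        (Ideal.Quotient.mk W (X 0)) c) ∧ (∀ i : Fin 1, ψ (X i) = Ideal.Quotient.mk W (X k.succ)) := by
    refine ⟨fun a => ?_, ?_, fun j => ?_, fun c => ?_, fun i => ?_⟩
    · rw [hρ, eval₂Hom_C]; rfl
    · rw [hρ, eval₂Hom_X']; simp [hg]
    · rw [hρ, eval₂Hom_X']; simp [hg]
    · rw [hψ, eval₂Hom_C]; rfl
    · rw [hψ, eval₂Hom_X']
  obtain ⟨S1, S2, S3, S4, S5⟩ := SIMPS
  have c1 : ψ.comp ρ = Ideal.Quotient.mk W := by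
    apply MvPolynomial.ringHom_ext
    · intro r
      rw [RingHom.comp_apply, S1, S4]
      simp
    · intro i
      induction i using Fin.cases with
      | zero =>
        rw [RingHom.comp_apply, S2, S4]
        simp
      | succ j =>
        by_cases hj : j = k
        · subst hj
          rw [RingHom.comp_apply, S3, if_pos rfl, S5]
        · rw [RingHom.comp_apply, S3, if_neg hj, map_zero]
          symm
          rw [Ideal.Quotient.eq_zero_iff_mem]
          exact Ideal.subset_span ⟨_, ⟨j, hj, rfl⟩, rfl⟩
  set ρbar : T ⧸ W →+* B := Ideal.Quotient.lift W ρ hρW with hρbar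
  have hlift : ∀ a : T, ρbar (Ideal.Quotient.mk W a) = ρ a := fun a =>
    Ideal.Quotient.lift_mk W ρ hρW
  have hcomp : ∀ t : T, ρbar (ψ (ρ t)) = ρ t := by
    intro t
    have h1 : ψ (ρ t) = Ideal.Quotient.mk W t := RingHom.congr_fun c1 t
    rw [h1]; exact hlift t
  have c3 : ρbar.comp ψ = RingHom.id B := by
    apply MvPolynomial.ringHom_ext
    · intro c
      have key : (ρbar.comp ψ).comp (C : A →+* B) = (C : A →+* B) := by
        apply Polynomial.ringHom_ext
        · intro a
          show ρbar (ψ (C (Polynomial.C a))) = C (Polynomial.C a)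
          rw [← S1]
          exact hcomp _
        · show ρbar (ψ (C Polynomial.X)) = C Polynomial.X
          rw [← S2]
          exact hcomp _
      have := RingHom.congr_fun key c
      simpa using this
    · intro i
      have : i = 0 := Subsingleton.elim i 0
      subst this
      show ρbar (ψ (X 0)) = X 0
      rw [S5, hlift, S3, if_pos rfl]
  have hsurj : Function.Surjective ρ := by
    intro b
    obtain ⟨a, ha⟩ := Ideal.Quotient.mk_surjective (ψ b)
    refine ⟨a, ?_⟩
    have h2 : ρbar (ψ b) = b := RingHom.congr_fun c3 b
    calc ρ a = ρbar (Ideal.Quotient.mk W a) := (hlift a).symm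
    _ = ρbar (ψ b) := by rw [ha]
    _ = b := h2
  have hker : RingHom.ker ρ = W := by
    apply le_antisymm
    · intro a ha
      rw [RingHom.mem_ker] at ha
      have := RingHom.congr_fun c1 a
      simp only [RingHom.comp_apply, ha, map_zero] at this
      rw [← Ideal.Quotient.eq_zero_iff_mem]
      exact this.symm
    · intro a ha
      rw [RingHom.mem_ker]
      exact hρW a ha
  -- push the chain forward
  have hkerle : ∀ {P : Ideal T}, P0 ≤ P → RingHom.ker ρ ≤ P := by
    intro P hP
    rw [hker]
    exact le_trans hWP0 hP
  have pushp : ∀ {P : Ideal T}, P.IsPrime → P0 ≤ P → (P.map ρ).IsPrime := by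
    intro P hP hle
    haveI := hP
    exact Ideal.map_isPrime_of_surjective hsurj (hkerle hle)
  have pushlt : ∀ {P Q : Ideal T}, P0 ≤ P → P0 ≤ Q → P < Q → P.map ρ < Q.map ρ := by
    intro P Q hP hQ h
    refine lt_of_le_of_ne (Ideal.map_mono h.le) ?_
    intro heq
    have key : ∀ {J : Ideal T}, P0 ≤ J → (J.map ρ).comap ρ = J := by
      intro J hJ
      rw [Ideal.comap_map_of_surjective ρ hsurj, ← RingHom.ker_eq_comap_bot]
      exact sup_eq_left.mpr (hkerle hJ)
    have := congrArg (Ideal.comap ρ) heq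
    rw [key hP, key hQ] at this
    exact h.ne this
  exact no_four_chain (pushp p0 le_rfl) (pushp p1 h01.le) (pushp p2 (le_trans h01.le h12.le))
    (pushp p3 (le_trans h01.le (le_trans h12.le h23.le)))
    (pushlt le_rfl h01.le h01) (pushlt h01.le (le_trans h01.le h12.le) h12)
    (pushlt (le_trans h01.le h12.le) (le_trans h01.le (le_trans h12.le h23.le)) h23)

lemma yy_dim (hn : 1 ≤ n) :
    ringKrullDim (MvPolynomial (Fin (n + 1)) K ⧸ yyIdeal K n) = (2 : ℕ) := by
  classical
  set yy : Ideal T := yyIdeal K n with hyydef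
  set i1 : Fin n := ⟨0, by omega⟩ with hi1
  set v0 : Fin (n + 1) → T := Fin.cases (X 0) (fun j => if j = i1 then X j.succ else 0) with hv0
  set v1 : Fin (n + 1) → T := Fin.cases (X 0) (fun _ => 0) with hv1
  set v2 : Fin (n + 1) → T := fun _ => 0 with hv2
  set V0 : Ideal T := RingHom.ker (aeval v0 : T →ₐ[K] T) with hV0
  set V1 : Ideal T := RingHom.ker (aeval v1 : T →ₐ[K] T) with hV1
  set V2 : Ideal T := RingHom.ker (aeval v2 : T →ₐ[K] T) with hV2
  have pV0 : V0.IsPrime := RingHom.ker_isPrime _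
  have pV1 : V1.IsPrime := RingHom.ker_isPrime _
  have pV2 : V2.IsPrime := RingHom.ker_isPrime _
  have comp01 : (aeval v1 : T →ₐ[K] T).comp (aeval v0) = (aeval v1 : T →ₐ[K] T) := by
    apply MvPolynomial.algHom_ext
    intro i
    induction i using Fin.cases with
    | zero => simp [hv0, hv1]
    | succ j =>
      by_cases hj : j = i1
      · subst hj; simp [hv0, hv1]
      · simp [hv0, hv1, if_neg hj]
  have comp12 : (aeval v2 : T →ₐ[K] T).comp (aeval v1) = (aeval v2 : T →ₐ[K] T) := by
    apply MvPolynomial.algHom_ext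
    intro i
    induction i using Fin.cases with
    | zero => simp [hv1, hv2]
    | succ j => simp [hv1, hv2]
  have hV01 : V0 ≤ V1 := by
    intro a ha
    rw [hV0, RingHom.mem_ker] at ha
    rw [hV1, RingHom.mem_ker, ← AlgHom.congr_fun comp01 a, AlgHom.comp_apply, ha, map_zero]
  have hV12 : V1 ≤ V2 := by
    intro a ha
    rw [hV1, RingHom.mem_ker] at ha
    rw [hV2, RingHom.mem_ker, ← AlgHom.congr_fun comp12 a, AlgHom.comp_apply, ha, map_zero]
  have hlt01 : V0 < V1 := by
    refine lt_of_le_of_ne hV01 ?_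
    intro heq
    have h1 : (X i1.succ : T) ∈ V1 := by
      rw [hV1, RingHom.mem_ker]
      simp [hv1]
    have h2 : (X i1.succ : T) ∉ V0 := by
      rw [hV0, RingHom.mem_ker]
      simp [hv0]
    rw [heq] at h2
    exact h2 h1
  have hlt12 : V1 < V2 := by
    refine lt_of_le_of_ne hV12 ?_
    intro heq
    have h1 : (X 0 : T) ∈ V2 := by
      rw [hV2, RingHom.mem_ker]
      simp [hv2]
    have h2 : (X 0 : T) ∉ V1 := by
      rw [hV1, RingHom.mem_ker]
      simp [hv1]
    rw [heq] at h2
    exact h2 h1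
  have hyyV0 : yy ≤ V0 := by
    rw [hyydef, yyIdeal, Ideal.span_le]
    rintro _ ⟨i, j, hij, rfl⟩
    have hj : j ≠ i1 := by
      intro h
      subst h
      exact absurd hij (by simp [hi1, Fin.lt_def])
    simp only [SetLike.mem_coe, hV0, RingHom.mem_ker, map_mul]
    have : aeval v0 (X j.succ : T) = 0 := by simp [hv0, if_neg hj]
    rw [this, mul_zero]
  have hyyV1 : yy ≤ V1 := le_trans hyyV0 hV01
  have hyyV2 : yy ≤ V2 := le_trans hyyV1 hV12
  have hnt : Nontrivial (T ⧸ yy) := by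
    refine Ideal.Quotient.nontrivial_iff.mpr ?_
    intro h
    exact pV0.ne_top (top_le_iff.mp (h ▸ hyyV0))
  haveI := hnt
  -- the chain of three primes in the quotient
  set mkq := Ideal.Quotient.mk yy with hmkq
  refine le_antisymm ?_ ?_
  · -- upper bound
    rw [show ringKrullDim (T ⧸ yy) = Order.krullDim (PrimeSpectrum (T ⧸ yy)) from rfl,
      Order.krullDim_eq_iSup_length]
    rw [show ((2 : ℕ) : WithBot ℕ∞) = ((2 : ℕ∞) : WithBot ℕ∞) from rfl,
      WithBot.coe_le_coe]
    refine iSup_le fun p => ?_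
    suffices h : p.length ≤ 2 by exact_mod_cast h
    by_contra hlen
    push_neg at hlen
    have hstep : ∀ a b : ℕ, (ha : a ≤ 3) → (hb : b ≤ 3) → a < b →
        p ⟨a, by omega⟩ < p ⟨b, by omega⟩ := by
      intro a b ha hb hab
      exact p.strictMono (by simp [Fin.lt_def, hab])
    set s0 := p ⟨0, by omega⟩
    set s1 := p ⟨1, by omega⟩
    set s2 := p ⟨2, by omega⟩
    set s3 := p ⟨3, by omega⟩
    have l01 : s0.asIdeal < s1.asIdeal :=
      (PrimeSpectrum.asIdeal_lt_asIdeal _ _).mpr (hstep 0 1 (by omega) (by omega) (by omega))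
    have l12 : s1.asIdeal < s2.asIdeal :=
      (PrimeSpectrum.asIdeal_lt_asIdeal _ _).mpr (hstep 1 2 (by omega) (by omega) (by omega))
    have l23 : s2.asIdeal < s3.asIdeal :=
      (PrimeSpectrum.asIdeal_lt_asIdeal _ _).mpr (hstep 2 3 (by omega) (by omega) (by omega))
    have comap_lt : ∀ {Q Q' : Ideal (T ⧸ yy)}, Q < Q' → Q.comap mkq < Q'.comap mkq := by
      intro Q Q' h
      refine lt_of_le_of_ne (Ideal.comap_mono h.le) ?_
      intro heq
      have key : ∀ J : Ideal (T ⧸ yy), (J.comap mkq).map mkq = J :=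
        fun J => Ideal.map_comap_of_surjective mkq Ideal.Quotient.mk_surjective J
      have := congrArg (Ideal.map mkq) heq
      rw [key Q, key Q'] at this
      exact h.ne this
    haveI := s0.2; haveI := s1.2; haveI := s2.2; haveI := s3.2
    have hyyP0 : yy ≤ s0.asIdeal.comap mkq := by
      intro a ha
      have : mkq a = 0 := Ideal.Quotient.eq_zero_iff_mem.mpr ha
      show mkq a ∈ s0.asIdeal
      rw [this]
      exact zero_mem _
    exact yy_upper hn (Ideal.IsPrime.comap _) (Ideal.IsPrime.comap _)
      (Ideal.IsPrime.comap _) (Ideal.IsPrime.comap _)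
      (comap_lt l01) (comap_lt l12) (comap_lt l23) hyyP0
  · -- lower bound
    have pQ0 := push_quot_prime hyyV0 pV0
    have pQ1 := push_quot_prime hyyV1 pV1
    have pQ2 := push_quot_prime hyyV2 pV2
    set series : LTSeries (PrimeSpectrum (T ⧸ yy)) :=
      { length := 2
        toFun := ![⟨V0.map mkq, pQ0⟩, ⟨V1.map mkq, pQ1⟩, ⟨V2.map mkq, pQ2⟩]
        step := by
          intro i
          fin_cases i
          · show (⟨V0.map mkq, pQ0⟩ : PrimeSpectrum _) < ⟨V1.map mkq, pQ1⟩
            rw [← PrimeSpectrum.asIdeal_lt_asIdeal]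
            exact push_quot_lt hyyV0 hyyV1 hlt01
          · show (⟨V1.map mkq, pQ1⟩ : PrimeSpectrum _) < ⟨V2.map mkq, pQ2⟩
            rw [← PrimeSpectrum.asIdeal_lt_asIdeal]
            exact push_quot_lt hyyV1 hyyV2 hlt12 }
    have h := Order.LTSeries.length_le_krullDim series
    exact_mod_cast h

end Bridge

/-- "Good" monomials: divisible by some `y_i y_j`, `i < j`. -/
def GoodMono (n : ℕ) (m : Fin (n + 1) →₀ ℕ) : Prop :=
  ∃ i j : Fin n, i < j ∧ m i.succ ≠ 0 ∧ m j.succ ≠ 0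

section RegSeq
variable {K : Type*} [Field K] {n : ℕ}

local notation "T" => MvPolynomial (Fin (n + 1)) K

lemma X_as_monomial (a : Fin (n + 1)) :
    (X a : T) = monomial (Finsupp.single a 1) 1 :=
  (pow_one (X a : T)).symm.trans X_pow_eq_monomial

lemma single_succ_apply_succ (i j : Fin n) :
    (Finsupp.single (i.succ : Fin (n + 1)) 1) j.succ = if i = j then 1 else 0 := by
  rw [Finsupp.single_apply]
  by_cases h : i = j
  · subst h; simp
  · rw [if_neg (fun hc => h (Fin.succ_injective n hc)), if_neg h]

lemma single_succ_apply_zero (i : Fin n) :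
    (Finsupp.single (i.succ : Fin (n + 1)) (1 : ℕ)) 0 = 0 := by
  rw [Finsupp.single_apply, if_neg (Fin.succ_ne_zero i)]

lemma yy_eq_span_monomials :
    yyIdeal K n = Ideal.span ((fun u => (monomial u (1 : K) : T)) ''
      {u | ∃ i j : Fin n, i < j ∧ u = Finsupp.single i.succ 1 + Finsupp.single j.succ 1}) := by
  rw [yyIdeal]
  congr 1
  ext f
  constructor
  · rintro ⟨i, j, hij, rfl⟩
    refine ⟨_, ⟨i, j, hij, rfl⟩, ?_⟩
    rw [X_as_monomial, X_as_monomial, monomial_mul, one_mul]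
  · rintro ⟨_, ⟨i, j, hij, rfl⟩, rfl⟩
    refine ⟨i, j, hij, ?_⟩
    rw [X_as_monomial, X_as_monomial, monomial_mul, one_mul]

lemma exists_le_iff_good (m : Fin (n + 1) →₀ ℕ) :
    (∃ u ∈ {u | ∃ i j : Fin n, i < j ∧
        u = Finsupp.single i.succ 1 + Finsupp.single j.succ 1}, u ≤ m) ↔ GoodMono n m := by
  constructor
  · rintro ⟨_, ⟨i, j, hij, rfl⟩, hle⟩
    refine ⟨i, j, hij, ?_, ?_⟩
    · have := (Finsupp.le_def.mp hle) i.succ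
      rw [Finsupp.add_apply, single_succ_apply_succ, single_succ_apply_succ,
        if_pos rfl, if_neg (fun h => hij.ne h.symm)] at this
      omega
    · have := (Finsupp.le_def.mp hle) j.succ
      rw [Finsupp.add_apply, single_succ_apply_succ, single_succ_apply_succ,
        if_neg hij.ne, if_pos rfl] at this
      omega
  · rintro ⟨i, j, hij, h1, h2⟩
    refine ⟨_, ⟨i, j, hij, rfl⟩, Finsupp.le_def.mpr fun a => ?_⟩
    rw [Finsupp.add_apply, Finsupp.single_apply, Finsupp.single_apply]
    by_cases ha : i.succ = a
    · subst ha
      rw [if_pos rfl, if_neg (fun h => hij.ne (Fin.succ_injective n h.symm))]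
      omega
    · rw [if_neg ha]
      by_cases hb : j.succ = a
      · subst hb
        rw [if_pos rfl]
        omega
      · rw [if_neg hb]
        omega

lemma mem_yy_iff (p : T) :
    p ∈ yyIdeal K n ↔ ∀ m ∈ p.support, GoodMono n m := by
  rw [yy_eq_span_monomials, mem_ideal_span_monomial_image]
  exact forall₂_congr fun m _ => exists_le_iff_good m

lemma mem_Z_iff (p : T) :
    p ∈ yyIdeal K n ⊔ Ideal.span {(X 0 : T)} ↔
      ∀ m ∈ p.support, GoodMono n m ∨ m 0 ≠ 0 := by
  have hZ : yyIdeal K n ⊔ Ideal.span {(X 0 : T)} =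
      Ideal.span ((fun u => (monomial u (1 : K) : T)) ''
        ({u | ∃ i j : Fin n, i < j ∧ u = Finsupp.single i.succ 1 + Finsupp.single j.succ 1} ∪
          {Finsupp.single 0 1})) := by
    rw [Set.image_union, Ideal.span_union, yy_eq_span_monomials]
    congr 2
    rw [Set.image_singleton, ← X_as_monomial]
  rw [hZ, mem_ideal_span_monomial_image]
  refine forall₂_congr fun m _ => ?_
  constructor
  · rintro ⟨u, hu | hu, hle⟩
    · exact Or.inl ((exists_le_iff_good m).mp ⟨u, hu, hle⟩)
    · rw [Set.mem_singleton_iff] at hu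
      subst hu
      have := (Finsupp.le_def.mp hle) 0
      rw [Finsupp.single_apply, if_pos rfl] at this
      exact Or.inr (by omega)
  · rintro (hg | h0)
    · obtain ⟨u, hu, hle⟩ := (exists_le_iff_good m).mpr hg
      exact ⟨u, Or.inl hu, hle⟩
    · refine ⟨Finsupp.single 0 1, Or.inr rfl, Finsupp.le_def.mpr fun a => ?_⟩
      rw [Finsupp.single_apply]
      by_cases ha : (0 : Fin (n + 1)) = a
      · subst ha; rw [if_pos rfl]; omega
      · rw [if_neg ha]; omega

lemma x_regular (s : T) (hs : (X 0 : T) * s ∈ yyIdeal K n) : s ∈ yyIdeal K n := by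
  rw [mem_yy_iff] at hs ⊢
  intro m hm
  have hc : coeff (Finsupp.single 0 1 + m) ((X 0 : T) * s) = coeff m s := coeff_X_mul m 0 s
  have hmem : (Finsupp.single 0 1 + m) ∈ ((X 0 : T) * s).support := by
    rw [mem_support_iff, hc]
    exact mem_support_iff.mp hm
  obtain ⟨i, j, hij, h1, h2⟩ := hs _ hmem
  have hre : ∀ a : Fin n, (Finsupp.single (0 : Fin (n + 1)) (1 : ℕ)) a.succ = 0 := fun a => by
    rw [Finsupp.single_apply, if_neg (fun h => (Fin.succ_ne_zero a) h.symm)]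
  rw [Finsupp.add_apply, hre i, zero_add] at h1
  rw [Finsupp.add_apply, hre j, zero_add] at h2
  exact ⟨i, j, hij, h1, h2⟩

lemma theta_regular (hn : 1 ≤ n) (s : T)
    (hs : (∑ j : Fin n, X j.succ : T) * s ∈ yyIdeal K n ⊔ Ideal.span {(X 0 : T)}) :
    s ∈ yyIdeal K n ⊔ Ideal.span {(X 0 : T)} := by
  classical
  rw [mem_Z_iff] at hs ⊢
  intro m hm
  by_contra hbad
  push_neg at hbad
  obtain ⟨hnotgood, hm0⟩ := hbad
  -- all `y`-exponents of `m` are concentrated in at most one index `i0`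
  have hi0 : ∃ i0 : Fin n, ∀ j : Fin n, j ≠ i0 → m j.succ = 0 := by
    by_cases hex : ∃ i : Fin n, m i.succ ≠ 0
    · obtain ⟨i0, hi0⟩ := hex
      refine ⟨i0, fun j hj => ?_⟩
      by_contra hjm
      rcases lt_trichotomy j i0 with h | h | h
      · exact hnotgood ⟨j, i0, h, hjm, hi0⟩
      · exact hj h
      · exact hnotgood ⟨i0, j, h, hi0, hjm⟩
    · push_neg at hex
      exact ⟨⟨0, hn⟩, fun j _ => hex j⟩
  obtain ⟨i0, hi0⟩ := hi0
  set m' : Fin (n + 1) →₀ ℕ := Finsupp.single i0.succ 1 + m with hm'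
  have hcoeff : coeff m' ((∑ j : Fin n, X j.succ : T) * s) = coeff m s := by
    rw [Finset.sum_mul, coeff_sum]
    rw [Finset.sum_eq_single i0]
    · exact coeff_X_mul m i0.succ s
    · intro j _ hj
      rw [coeff_X_mul', if_neg]
      rw [Finsupp.mem_support_iff]
      push_neg
      rw [hm', Finsupp.add_apply, single_succ_apply_succ, if_neg (fun h => hj h.symm),
        zero_add]
      exact hi0 j hj
    · intro h
      exact absurd (Finset.mem_univ i0) h
  have hmem : m' ∈ ((∑ j : Fin n, X j.succ : T) * s).support := by
    rw [mem_support_iff, hcoeff]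
    exact mem_support_iff.mp hm
  rcases hs m' hmem with hg | h0
  · obtain ⟨i, j, hij, h1, h2⟩ := hg
    have key : ∀ a : Fin n, a ≠ i0 → m' a.succ = 0 := by
      intro a ha
      rw [hm', Finsupp.add_apply, single_succ_apply_succ, if_neg (fun h => ha h.symm),
        zero_add, hi0 a ha]
    have hii : i = i0 := by
      by_contra h
      exact h1 (key i h)
    have hjj : j = i0 := by
      by_contra h
      exact h2 (key j h)
    exact hij.ne (hii.trans hjj.symm)
  · apply h0
    rw [hm', Finsupp.add_apply, single_succ_apply_zero, zero_add, hm0]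

end RegSeq

set_option maxHeartbeats 1000000 in
set_option synthInstance.maxHeartbeats 100000 in
/-- `S/(I,z) ≅ K[x,y_1,…,y_n]/(y_iy_j : i<j)` as graded `K`-algebras (the isomorphism
sends `x ↦ x`, `y_i ↦ y_i`, `z ↦ 0`), and it is Cohen–Macaulay of Krull dimension `2`. -/
theorem diamond_mod_z (K : Type*) [Field K] (n : ℕ) (hn : 3 ≤ n) :
    (∃ e : (MvPolynomial (Fin (n + 2)) K ⧸ (diamondIdeal K n + Ideal.span {zP K n})) ≃ₐ[K]
        (MvPolynomial (Fin (n + 1)) K ⧸ yyIdeal K n),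
      e (Ideal.Quotient.mk _ (xP K n)) = Ideal.Quotient.mk _ (X 0) ∧
      (∀ i : Fin n, e (Ideal.Quotient.mk _ (yP K n i)) = Ideal.Quotient.mk _ (X i.succ)) ∧
      e (Ideal.Quotient.mk _ (zP K n)) = 0) ∧
    IsCMofDim (diamondIdeal K n + Ideal.span {zP K n}) 2 := by
  classical
  have hn1 : 1 ≤ n := by omega
  set J : Ideal (MvPolynomial (Fin (n + 2)) K) := diamondIdeal K n + Ideal.span {zP K n} with hJ
  have hJsup : J = diamondIdeal K n ⊔ Ideal.span {zP K n} := Ideal.add_eq_sup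
  set F0 : MvPolynomial (Fin (n + 2)) K →ₐ[K] MvPolynomial (Fin (n + 1)) K :=
    aeval (fun m => Fin.lastCases (0 : MvPolynomial (Fin (n + 1)) K) (fun i => X i) m) with hF0
  have hF0x : F0 (xP K n) = X 0 := by
    rw [hF0, xP, aeval_X, ← Fin.castSucc_zero, Fin.lastCases_castSucc]
  have hF0y : ∀ i : Fin n, F0 (yP K n i) = X i.succ := fun i => by
    rw [hF0, yP, aeval_X, Fin.lastCases_castSucc]
  have hF0z : F0 (zP K n) = 0 := by
    rw [hF0, zP, aeval_X, Fin.lastCases_last]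
  have hJker : ∀ a ∈ J, F0 a ∈ yyIdeal K n := by
    intro a ha
    have hle : J ≤ Ideal.comap F0.toRingHom (yyIdeal K n) := by
      rw [hJsup]
      apply sup_le
      · rw [diamondIdeal, Ideal.span_le]
        rintro _ ⟨i, j, hij, rfl⟩
        simp only [SetLike.mem_coe, Ideal.mem_comap, AlgHom.toRingHom_eq_coe, RingHom.coe_coe,
          map_sub, map_mul, hF0x, hF0y, hF0z, mul_zero, sub_zero]
        exact Ideal.subset_span ⟨i, j, hij, rfl⟩
      · rw [Ideal.span_le, Set.singleton_subset_iff]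
        simp only [SetLike.mem_coe, Ideal.mem_comap, AlgHom.toRingHom_eq_coe, RingHom.coe_coe,
          hF0z]
        exact Ideal.zero_mem _
    exact hle ha
  set Fbar := Ideal.Quotient.liftₐ J ((Ideal.Quotient.mkₐ K (yyIdeal K n)).comp F0)
      (fun a ha => by
        rw [AlgHom.comp_apply, Ideal.Quotient.mkₐ_eq_mk, Ideal.Quotient.eq_zero_iff_mem]
        exact hJker a ha) with hFbar
  have hFbar_mk : ∀ a, Fbar (Ideal.Quotient.mk J a) =
      Ideal.Quotient.mk (yyIdeal K n) (F0 a) := by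
    intro a
    rw [hFbar, Ideal.Quotient.liftₐ_apply]
    rfl
  set G0 : MvPolynomial (Fin (n + 1)) K →ₐ[K] MvPolynomial (Fin (n + 2)) K :=
    aeval (fun i => X (Fin.castSucc i)) with hG0
  have hzJ : zP K n ∈ J := by
    rw [hJsup]
    exact Ideal.mem_sup_right (Ideal.subset_span rfl)
  have hyyJ : ∀ a ∈ yyIdeal K n, G0 a ∈ J := by
    intro a ha
    have hle : yyIdeal K n ≤ Ideal.comap G0.toRingHom J := by
      rw [yyIdeal, Ideal.span_le]
      rintro _ ⟨i, j, hij, rfl⟩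
      simp only [SetLike.mem_coe, Ideal.mem_comap, AlgHom.toRingHom_eq_coe, RingHom.coe_coe,
        map_mul, hG0, aeval_X]
      have heq : (X (Fin.castSucc i.succ) * X (Fin.castSucc j.succ) :
          MvPolynomial (Fin (n + 2)) K) =
          (yP K n i * yP K n j - xP K n * zP K n) + xP K n * zP K n := by
        rw [yP, yP]; ring
      rw [heq]
      refine Ideal.add_mem _ ?_ ?_
      · rw [hJsup]
        exact Ideal.mem_sup_left (Ideal.subset_span ⟨i, j, hij, rfl⟩)
      · rw [hJsup]
        exact Ideal.mem_sup_right (Ideal.mem_span_singleton.mpr ⟨xP K n, mul_comm _ _⟩)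
    exact hle ha
  set Gbar := Ideal.Quotient.liftₐ (yyIdeal K n) ((Ideal.Quotient.mkₐ K J).comp G0)
      (fun a ha => by
        rw [AlgHom.comp_apply, Ideal.Quotient.mkₐ_eq_mk, Ideal.Quotient.eq_zero_iff_mem]
        exact hyyJ a ha) with hGbar
  have hGbar_mk : ∀ a, Gbar (Ideal.Quotient.mk (yyIdeal K n) a) =
      Ideal.Quotient.mk J (G0 a) := by
    intro a
    rw [hGbar, Ideal.Quotient.liftₐ_apply]
    rfl
  have hFG : Fbar.comp Gbar = AlgHom.id K _ := by
    apply Ideal.Quotient.algHom_ext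
    apply MvPolynomial.algHom_ext
    intro i
    rw [AlgHom.comp_apply, AlgHom.comp_apply, Ideal.Quotient.mkₐ_eq_mk, hGbar_mk, hFbar_mk,
      hG0, aeval_X, hF0, aeval_X, Fin.lastCases_castSucc]
    rfl
  have hGF : Gbar.comp Fbar = AlgHom.id K _ := by
    apply Ideal.Quotient.algHom_ext
    apply MvPolynomial.algHom_ext
    intro m
    induction m using Fin.lastCases with
    | last =>
      rw [AlgHom.comp_apply, AlgHom.comp_apply, Ideal.Quotient.mkₐ_eq_mk, hFbar_mk,
        hF0, aeval_X, Fin.lastCases_last, map_zero]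
      symm
      show Ideal.Quotient.mk J (X (Fin.last (n + 1))) = 0
      rw [Ideal.Quotient.eq_zero_iff_mem]
      exact hzJ
    | cast i =>
      rw [AlgHom.comp_apply, AlgHom.comp_apply, Ideal.Quotient.mkₐ_eq_mk, hFbar_mk,
        hF0, aeval_X, Fin.lastCases_castSucc, hGbar_mk, hG0, aeval_X]
      rfl
  set e := AlgEquiv.ofAlgHom Fbar Gbar hFG hGF with he
  have hex : e (Ideal.Quotient.mk J (xP K n)) = Ideal.Quotient.mk (yyIdeal K n) (X 0) := by
    show Fbar (Ideal.Quotient.mk J (xP K n)) = _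
    rw [hFbar_mk, hF0x]
  have hey : ∀ i : Fin n, e (Ideal.Quotient.mk J (yP K n i)) =
      Ideal.Quotient.mk (yyIdeal K n) (X i.succ) := fun i => by
    show Fbar (Ideal.Quotient.mk J (yP K n i)) = _
    rw [hFbar_mk, hF0y]
  have hez : e (Ideal.Quotient.mk J (zP K n)) = 0 := by
    show Fbar (Ideal.Quotient.mk J (zP K n)) = _
    rw [hFbar_mk, hF0z, map_zero]
  refine ⟨⟨e, hex, hey, hez⟩, ?_, ?_⟩
  · -- Krull dimension
    calc ringKrullDim (MvPolynomial (Fin (n + 2)) K ⧸ J)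
        = ringKrullDim (MvPolynomial (Fin (n + 1)) K ⧸ yyIdeal K n) :=
          ringKrullDim_eq_of_ringEquiv e.toRingEquiv
      _ = (2 : ℕ) := yy_dim hn1
  · -- regular sequence
    set θ : MvPolynomial (Fin (n + 1)) K := ∑ j : Fin n, X j.succ with hθ
    have heθ : e (Ideal.Quotient.mk J (∑ j : Fin n, yP K n j)) =
        Ideal.Quotient.mk (yyIdeal K n) θ := by
      have s1 : Ideal.Quotient.mk J (∑ j : Fin n, yP K n j) =
          ∑ j : Fin n, Ideal.Quotient.mk J (yP K n j) := map_sum _ _ _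
      have s2 : Ideal.Quotient.mk (yyIdeal K n) θ =
          ∑ j : Fin n, Ideal.Quotient.mk (yyIdeal K n) (X j.succ) := by
        rw [hθ]; exact map_sum _ _ _
      rw [s1, map_sum e, s2]
      exact Finset.sum_congr rfl fun j _ => hey j
    set f : Fin 2 → (MvPolynomial (Fin (n + 2)) K ⧸ J) :=
      ![Ideal.Quotient.mk J (xP K n), Ideal.Quotient.mk J (∑ j : Fin n, yP K n j)] with hf
    have hf0 : f 0 = Ideal.Quotient.mk J (xP K n) := rfl
    have hf1 : f 1 = Ideal.Quotient.mk J (∑ j : Fin n, yP K n j) := rfl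
    -- the key span-membership transfer for `span {mk (X 0)}`
    have hmapZ : Ideal.map (Ideal.Quotient.mk (yyIdeal K n))
        (yyIdeal K n ⊔ Ideal.span {(X 0 : MvPolynomial (Fin (n + 1)) K)}) =
        Ideal.span {Ideal.Quotient.mk (yyIdeal K n) (X 0)} := by
      rw [Ideal.map_sup]
      have h1 : Ideal.map (Ideal.Quotient.mk (yyIdeal K n)) (yyIdeal K n) = ⊥ := by
        rw [← le_bot_iff]
        rw [Ideal.map_le_iff_le_comap]
        intro a ha
        simp only [Ideal.mem_comap, Ideal.mem_bot]
        exact Ideal.Quotient.eq_zero_iff_mem.mpr ha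
      rw [h1, Ideal.map_span, Set.image_singleton, bot_sup_eq]
    have hkey : ∀ a : MvPolynomial (Fin (n + 1)) K,
        Ideal.Quotient.mk (yyIdeal K n) a ∈
          Ideal.span {Ideal.Quotient.mk (yyIdeal K n) (X 0)} ↔
        a ∈ yyIdeal K n ⊔ Ideal.span {(X 0 : MvPolynomial (Fin (n + 1)) K)} := by
      intro a
      rw [← hmapZ]
      constructor
      · intro h
        have h2 := Ideal.comap_map_of_surjective (Ideal.Quotient.mk (yyIdeal K n)) Ideal.Quotient.mk_surjective
          (yyIdeal K n ⊔ Ideal.span {(X 0 : MvPolynomial (Fin (n + 1)) K)})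
        have h3 : a ∈ Ideal.comap (Ideal.Quotient.mk (yyIdeal K n))
            (Ideal.map (Ideal.Quotient.mk (yyIdeal K n))
              (yyIdeal K n ⊔ Ideal.span {(X 0 : MvPolynomial (Fin (n + 1)) K)})) := h
        rw [h2, ← RingHom.ker_eq_comap_bot, Ideal.mk_ker] at h3
        rwa [sup_eq_left.mpr (le_trans le_sup_left le_rfl : yyIdeal K n ≤ _)] at h3
      · exact fun h => Ideal.mem_map_of_mem _ h
    refine ⟨f, ?_, ?_, ?_⟩
    · -- membership in the irrelevant ideal
      intro i
      induction i using Fin.cases with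
      | zero =>
        rw [hf0]
        exact Ideal.mem_map_of_mem _ (Ideal.subset_span ⟨0, rfl⟩)
      | succ j =>
        have hj : j = 0 := Subsingleton.elim _ _
        subst hj
        rw [show ((0 : Fin 1).succ : Fin 2) = 1 from rfl, hf1]
        exact Ideal.mem_map_of_mem _
          (Submodule.sum_mem _ fun j _ => Ideal.subset_span ⟨j.succ.castSucc, rfl⟩)
    · -- the colon conditions
      intro k s hks
      induction k using Fin.cases with
      | zero =>
        have hset : f '' {j : Fin 2 | j < 0} = ∅ := by
          rw [Set.image_eq_empty]
          exact Set.eq_empty_iff_forall_notMem.mpr fun j hj => Fin.not_lt_zero j hj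
        have hks0 : Ideal.Quotient.mk J (xP K n) * s ∈
            Ideal.span (f '' {j : Fin 2 | j < 0}) := hks
        rw [hset, Ideal.span_empty, Ideal.mem_bot] at hks0
        rw [hset, Ideal.span_empty, Ideal.mem_bot]
        apply e.injective
        rw [map_zero]
        have hmul : Ideal.Quotient.mk (yyIdeal K n) (X 0) * e s = 0 := by
          rw [← hex, ← map_mul, hks0, map_zero]
        obtain ⟨t, ht⟩ := Ideal.Quotient.mk_surjective (e s)
        rw [← ht, ← map_mul, Ideal.Quotient.eq_zero_iff_mem] at hmul
        have := x_regular t hmul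
        rw [← ht, Ideal.Quotient.eq_zero_iff_mem]
        exact this
      | succ k0 =>
        have hk0 : k0 = 0 := Subsingleton.elim _ _
        subst hk0
        have hsucc : ((0 : Fin 1).succ : Fin 2) = 1 := rfl
        rw [hsucc] at hks ⊢
        have hset : f '' {j : Fin 2 | j < 1} = {f 0} := by
          have : {j : Fin 2 | j < 1} = {0} := by
            ext a
            simp only [Set.mem_setOf_eq, Set.mem_singleton_iff, Fin.lt_def, Fin.ext_iff]
            omega
          rw [this, Set.image_singleton]
        have hks1 : Ideal.Quotient.mk J (∑ j : Fin n, yP K n j) * s ∈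
            Ideal.span (f '' {j : Fin 2 | j < 1}) := hks
        rw [hset] at hks1
        rw [hset]
        have hdvd : Ideal.Quotient.mk J (xP K n) ∣
            Ideal.Quotient.mk J (∑ j : Fin n, yP K n j) * s := by
          have := Ideal.mem_span_singleton.mp hks1
          rwa [hf0] at this
        have hdvd2 : Ideal.Quotient.mk (yyIdeal K n) (X 0) ∣
            Ideal.Quotient.mk (yyIdeal K n) θ * e s := by
          have h := map_dvd e hdvd
          rw [map_mul] at h
          rwa [hex, heθ] at h
        obtain ⟨t, ht⟩ := Ideal.Quotient.mk_surjective (e s)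
        have hmem : θ * t ∈ yyIdeal K n ⊔
            Ideal.span {(X 0 : MvPolynomial (Fin (n + 1)) K)} := by
          rw [← hkey, map_mul, ht]
          exact Ideal.mem_span_singleton.mpr hdvd2
        have := theta_regular hn1 t hmem
        rw [← hkey, ht] at this
        have hdvd3 : Ideal.Quotient.mk (yyIdeal K n) (X 0) ∣ e s :=
          Ideal.mem_span_singleton.mp this
        have hdvd4 : Ideal.Quotient.mk J (xP K n) ∣ s := by
          have h5 := map_dvd e.symm hdvd3
          rw [AlgEquiv.symm_apply_apply] at h5
          have h6 : e.symm (Ideal.Quotient.mk (yyIdeal K n) (X 0)) =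
              Ideal.Quotient.mk J (xP K n) :=
            (AlgEquiv.symm_apply_eq e).mpr hex.symm
          rwa [h6] at h5
        rw [hf0]
        exact Ideal.mem_span_singleton.mpr hdvd4
    · -- span of the sequence is proper
      intro htop
      have h1 : (1 : MvPolynomial (Fin (n + 2)) K ⧸ J) ∈ Ideal.span (Set.range f) := by
        rw [htop]; trivial
      have hrange : Set.range f = {f 0, f 1} := by
        ext x
        constructor
        · rintro ⟨j, rfl⟩
          induction j using Fin.cases with
          | zero => exact Or.inl rfl
          | succ j0 =>
            have hj : j0 = 0 := Subsingleton.elim _ _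
            subst hj
            exact Or.inr rfl
        · rintro (rfl | rfl)
          · exact ⟨0, rfl⟩
          · exact ⟨1, rfl⟩
      rw [hrange] at h1
      obtain ⟨a, b, hab⟩ := Ideal.mem_span_pair.mp h1
      have hab' : a * Ideal.Quotient.mk J (xP K n) +
          b * Ideal.Quotient.mk J (∑ j : Fin n, yP K n j) = 1 := hab
      have hab2 : e a * Ideal.Quotient.mk (yyIdeal K n) (X 0) +
          e b * Ideal.Quotient.mk (yyIdeal K n) θ = 1 := by
        have h := congrArg e hab'
        rwa [map_add, map_mul, map_mul, map_one, hex, heθ] at h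
      have h2 : (1 : MvPolynomial (Fin (n + 1)) K ⧸ yyIdeal K n) ∈
          Ideal.span {Ideal.Quotient.mk (yyIdeal K n) (X 0),
            Ideal.Quotient.mk (yyIdeal K n) θ} :=
        Ideal.mem_span_pair.mpr ⟨e a, e b, hab2⟩
      -- everything lands in the image of the ideal of variables
      set VU : Ideal (MvPolynomial (Fin (n + 1)) K) :=
        Ideal.span (X '' (Set.univ : Set (Fin (n + 1)))) with hVU
      have hVUmem : Ideal.span {Ideal.Quotient.mk (yyIdeal K n) (X 0),
          Ideal.Quotient.mk (yyIdeal K n) θ} ≤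
          Ideal.map (Ideal.Quotient.mk (yyIdeal K n)) VU := by
        rw [Ideal.span_le]
        rintro x (rfl | rfl)
        · exact Ideal.mem_map_of_mem _ (Ideal.subset_span ⟨0, trivial, rfl⟩)
        · exact Ideal.mem_map_of_mem _
            (Submodule.sum_mem _ fun j _ => Ideal.subset_span ⟨j.succ, trivial, rfl⟩)
      have h3 : (1 : MvPolynomial (Fin (n + 1)) K) ∈ VU := by
        have h4 : Ideal.Quotient.mk (yyIdeal K n) 1 ∈
            Ideal.map (Ideal.Quotient.mk (yyIdeal K n)) VU := by
          rw [map_one]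
          exact hVUmem h2
        have h5 := Ideal.comap_map_of_surjective (Ideal.Quotient.mk (yyIdeal K n)) Ideal.Quotient.mk_surjective VU
        have h6 : (1 : MvPolynomial (Fin (n + 1)) K) ∈
            Ideal.comap (Ideal.Quotient.mk (yyIdeal K n))
              (Ideal.map (Ideal.Quotient.mk (yyIdeal K n)) VU) := h4
        rw [h5, ← RingHom.ker_eq_comap_bot, Ideal.mk_ker] at h6
        have hyyVU : yyIdeal K n ≤ VU := by
          rw [yyIdeal, Ideal.span_le]
          rintro _ ⟨i, j, hij, rfl⟩
          exact Ideal.mul_mem_left _ _ (Ideal.subset_span ⟨j.succ, trivial, rfl⟩)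
        rwa [sup_eq_left.mpr hyyVU] at h6
      obtain ⟨i, -, hi⟩ := mem_ideal_span_X_image.mp h3 0 (by
        rw [mem_support_iff, coeff_zero_one]
        exact one_ne_zero)
      simp at hi
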